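/- Let 𝓜 be the set of functions f : {0,1}^n → ℂ such that f(x) = 0 whenever the Hamming weight |x| exceeds 1. If f ∈ 𝓜 has arity k ≥ 2, then h'(x₁,…,x_{k−2}) := Σ_{y₁,y₂∈{0,1}} f(x₁,…,x_{k−2},y₁,y₂)·NEQ(y₁,y₂) is either a constant (if k = 2) or again in 𝓜, where NEQ(y₁,y₂) = 1 if y₁ ≠ y₂ and 0 otherwise. -/

import Mathlib

/-- `f` is a generalised matching function: it vanishes on inputs of
Hamming weight greater than 1. -/
def InM {n : ℕ} (f : (Fin n → Bool) → ℂ) : Prop :=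
  ∀ x : Fin n → Bool, 1 < (Finset.univ.filter (fun i => x i = true)).card → f x = 0

/-- The binary disequality function. -/
def NEQ (y₁ y₂ : Bool) : ℂ := if y₁ = y₂ then 0 else 1

/-- NEQ-contracting the last two arguments of a generalised matching function of arity
`k = m+2 ≥ 2` yields a constant (when `k = 2`) or again a generalised matching
function. -/
theorem InM_contract_self (m : ℕ) (f : (Fin (m + 2) → Bool) → ℂ) (hf : InM f) :
    m = 0 ∨
      InM (fun x : Fin m → Bool => ∑ y₁ : Bool, ∑ y₂ : Bool,
        f (Fin.snoc (Fin.snoc x y₁) y₂) * NEQ y₁ y₂) := by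
  right
  intro x hx
  simp only
  apply Finset.sum_eq_zero
  intro y₁ _
  apply Finset.sum_eq_zero
  intro y₂ _
  have hz : f (Fin.snoc (Fin.snoc x y₁) y₂) = 0 := by
    apply hf
    refine lt_of_lt_of_le hx ?_
    apply Finset.card_le_card_of_injOn (fun i => i.castSucc.castSucc)
    · intro i hi
      simp only [Finset.mem_coe, Finset.mem_filter, Finset.mem_univ, true_and] at hi ⊢
      simp [Fin.snoc_castSucc, hi]
    · intro a _ b _ h
      simpa [Fin.castSucc_inj] using h
  simp [hz]
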